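/- Let structure constants C^C_{A_1...A_n} satisfy the generalized Jacobi condition ε^{B_1...B_{2n−1}}_{A_1...A_{2n−1}} C^C_{B_1...B_n} C^D_{C B_{n+1}...B_{2n−1}} = 0, and let K^γ_{αβ} be the structure constants of a finite commutative semigroup (so K^γ_{α_1...α_n} := composition via associativity is totally symmetric). Then the expanded structure constants C^{(C,γ)}_{(A_1,α_1)...(A_n,α_n)} = K^γ_{α_1...α_n} C^C_{A_1...A_n} also satisfy the generalized Jacobi condition. -/
import Mathlib


/-- Generalized Kronecker delta `ε^{B}_{A}` on r-tuples of indices. -/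
def gdelta {ι : Type*} [DecidableEq ι] {r : ℕ} (A B : Fin r → ι) : ℤ :=
  ∑ σ : Equiv.Perm (Fin r), (Equiv.Perm.sign σ : ℤ) *
    ∏ k, (if A (σ k) = B k then 1 else 0)

/-- n-fold product in a (possibly non-unital) multiplicative structure. -/
def sprod {S : Type*} [Mul S] {m : ℕ} (l : Fin (m + 1) → S) : S :=
  (List.ofFn fun j : Fin m => l j.succ).foldl (· * ·) (l 0)

/-- Generalized Jacobi condition on structure constants of an (m+1)-bracket:
`ε^{B_1...B_{2n-1}}_{A_1...A_{2n-1}} C^c_{B_1...B_n} C^D_{c B_{n+1}...B_{2n-1}} = 0`. -/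
def GJC {ι R : Type*} [Fintype ι] [DecidableEq ι] [CommRing R] {m : ℕ}
    (C : (Fin (m + 1) → ι) → ι → R) : Prop :=
  ∀ (A : Fin (2 * m + 1) → ι) (D : ι),
    ∑ B : Fin (2 * m + 1) → ι, ∑ c : ι,
      (gdelta A B : R) * C (fun j => B (Fin.castLE (by omega) j)) c *
        C (Fin.cons c fun j : Fin m => B ⟨m + 1 + j.1, by have := j.isLt; omega⟩) D = 0

open Finset

lemma foldl_coe {S : Type*} [CommSemigroup S] (L : List S) (x : S) :
    ((L.foldl (· * ·) x : S) : WithOne S) = (x : WithOne S) * (L.map ((↑·) : S → WithOne S)).prod := by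
  induction L generalizing x with
  | nil => simp
  | cons a L ih => simp [ih, mul_assoc]

lemma sprod_coe {S : Type*} [CommSemigroup S] {m : ℕ} (l : Fin (m+1) → S) :
    ((sprod l : S) : WithOne S) = ∏ k : Fin (m+1), (l k : WithOne S) := by
  rw [sprod, foldl_coe, List.map_ofFn, List.prod_ofFn, Fin.prod_univ_succ]
  rfl

lemma prod_split {M : Type*} [CommMonoid M] {m : ℕ} (g : Fin (2*m+1) → M) :
    ∏ k, g k = (∏ j : Fin (m+1), g (Fin.castLE (by omega) j)) *
      ∏ j : Fin m, g ⟨m+1+j.1, by omega⟩ := by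
  rw [← Equiv.prod_comp (finSumFinEquiv.trans (finCongr (by omega : m+1+m = 2*m+1))) g,
    Fintype.prod_sum_type]
  congr 1

lemma key {S : Type*} [CommSemigroup S] {m : ℕ} (α : Fin (2*m+1) → S)
    (σ : Equiv.Perm (Fin (2*m+1))) :
    sprod (Fin.cons (sprod fun j : Fin (m+1) => α (σ (Fin.castLE (by omega) j)))
      (fun j : Fin m => α (σ ⟨m+1+j.1, by omega⟩))) = sprod α := by
  rw [← WithOne.coe_inj]
  rw [sprod_coe, Fin.prod_univ_succ]
  simp only [Fin.cons_zero, Fin.cons_succ, sprod_coe]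
  rw [← Equiv.prod_comp σ (fun k => (α k : WithOne S)),
    prod_split (fun k => (α (σ k) : WithOne S))]

lemma sum_gdelta_mul {ι R : Type*} [Fintype ι] [DecidableEq ι] [CommRing R] {r : ℕ}
    (A : Fin r → ι) (f : (Fin r → ι) → R) :
    ∑ B : Fin r → ι, (gdelta A B : R) * f B
      = ∑ σ : Equiv.Perm (Fin r), (Equiv.Perm.sign σ : ℤ) * f (fun k => A (σ k)) := by
  unfold gdelta
  push_cast
  simp only [Finset.sum_mul]
  rw [Finset.sum_comm]
  refine Finset.sum_congr rfl fun σ _ => ?_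
  simp only [mul_assoc]
  rw [← Finset.mul_sum]
  congr 1
  have h : ∀ B : Fin r → ι,
      (∏ k, (if A (σ k) = B k then (1:R) else 0)) = if (fun k => A (σ k)) = B then 1 else 0 := by
    intro B
    rw [Finset.prod_boole]
    simp [funext_iff]
  simp only [h, ite_mul, one_mul, zero_mul]
  simpa using Finset.sum_ite_eq Finset.univ (fun k => A (σ k)) f

lemma cons_fst {X Y : Type*} {m : ℕ} (c : X × Y) (f : Fin m → X × Y) :
    (fun k => (Fin.cons (α := fun _ => X × Y) c f k).1) = Fin.cons c.1 (fun j => (f j).1) := by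
  funext k; induction k using Fin.cases <;> simp

lemma cons_snd {X Y : Type*} {m : ℕ} (c : X × Y) (f : Fin m → X × Y) :
    (fun k => (Fin.cons (α := fun _ => X × Y) c f k).2) = Fin.cons c.2 (fun j => (f j).2) := by
  funext k; induction k using Fin.cases <;> simp

/-- the S-expanded structure constants
`C^{(c,γ)}_{(A_1,α_1)...(A_n,α_n)} = K^γ_{α_1...α_n} C^c_{A_1...A_n}`
satisfy the generalized Jacobi condition whenever the original ones do. -/
theorem expanded_structure_constants_GJC {ι S R : Type*} [Fintype ι] [DecidableEq ι]
    [Fintype S] [DecidableEq S] [CommSemigroup S] [CommRing R] (m : ℕ)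
    (C : (Fin (m + 1) → ι) → ι → R) (hC : GJC C) :
    GJC (fun (As : Fin (m + 1) → ι × S) (Cg : ι × S) =>
      (if sprod (fun k => (As k).2) = Cg.2 then (1 : R) else 0) *
        C (fun k => (As k).1) Cg.1) := by
  intro A D
  have h2 := hC (fun k => (A k).1) D.1
  simp only [mul_assoc, ← Finset.mul_sum] at h2
  rw [sum_gdelta_mul] at h2
  simp only [cons_fst, cons_snd, mul_assoc, ← Finset.mul_sum]
  rw [sum_gdelta_mul]
  beta_reduce
  beta_reduce at h2
  have hT : ∀ σ : Equiv.Perm (Fin (2*m+1)),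
      (∑ i : ι × S,
        (if (sprod fun k : Fin (m+1) => (A (σ (Fin.castLE (by omega) k))).2) = i.2 then (1:R) else 0) *
          (C (fun k : Fin (m+1) => (A (σ (Fin.castLE (by omega) k))).1) i.1 *
            ((if sprod (Fin.cons i.2 fun j : Fin m => (A (σ ⟨m+1+j.1, by omega⟩)).2) = D.2 then (1:R) else 0) *
              C (Fin.cons i.1 fun j : Fin m => (A (σ ⟨m+1+j.1, by omega⟩)).1) D.1)))
      = (if sprod (fun k => (A k).2) = D.2 then (1:R) else 0) *
        ∑ c : ι, C (fun j : Fin (m+1) => (A (σ (Fin.castLE (by omega) j))).1) c *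
          C (Fin.cons c fun j : Fin m => (A (σ ⟨m+1+j.1, by omega⟩)).1) D.1 := by
    intro σ
    rw [Fintype.sum_prod_type, Finset.mul_sum]
    refine Finset.sum_congr rfl fun c₁ _ => ?_
    simp only [ite_mul, one_mul, zero_mul]
    rw [Finset.sum_ite_eq]
    simp only [Finset.mem_univ, if_true]
    rw [key (fun k => (A k).2) σ]
    rw [mul_ite, mul_zero]
  have hfin : ∑ σ : Equiv.Perm (Fin (2*m+1)), ((Equiv.Perm.sign σ : ℤ) : R) *
      ∑ i : ι × S,
        (if (sprod fun k : Fin (m+1) => (A (σ (Fin.castLE (by omega) k))).2) = i.2 then (1:R) else 0) *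
          (C (fun k : Fin (m+1) => (A (σ (Fin.castLE (by omega) k))).1) i.1 *
            ((if sprod (Fin.cons i.2 fun j : Fin m => (A (σ ⟨m+1+j.1, by omega⟩)).2) = D.2 then (1:R) else 0) *
              C (Fin.cons i.1 fun j : Fin m => (A (σ ⟨m+1+j.1, by omega⟩)).1) D.1))
      = (if sprod (fun k => (A k).2) = D.2 then (1:R) else 0) *
        ∑ σ : Equiv.Perm (Fin (2*m+1)), ((Equiv.Perm.sign σ : ℤ) : R) *
          ∑ c : ι, C (fun j : Fin (m+1) => (A (σ (Fin.castLE (by omega) j))).1) c *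
            C (Fin.cons c fun j : Fin m => (A (σ ⟨m+1+j.1, by omega⟩)).1) D.1 := by
    rw [Finset.mul_sum]
    refine Finset.sum_congr rfl fun σ _ => ?_
    rw [hT σ]; ring
  rw [hfin, h2, mul_zero]
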